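/- Let S be a string of length n, let k ≥ 1, and let x be an integer with 1 ≤ x ≤ n/2. Define I = { i : 1 ≤ i ≤ x/(4k+2) and HAM(S[1,x], S[i+1,i+x]) ≤ k }. Then for any two p, q ∈ I with p < q, their greatest common divisor d = gcd(p,q) satisfies HAM(S[1,x], S[d+1,d+x]) ≤ 16k² + 1. -/

import Mathlib

def hamShift {α : Type*} [DecidableEq α] (S : ℕ → α) (x i : ℕ) : ℕ :=
  ((Finset.Icc 1 x).filter fun z => S z ≠ S (z + i)).card

namespace HamAux

def off (p q s : ℕ) : ℕ → ℕ
  | 0 => s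
  | t + 1 => if off p q s t + p + 1 ≤ p + q then off p q s t + p else off p q s t - q

def bo (p q s t : ℕ) : ℕ :=
  if off p q s t + p + 1 ≤ p + q then off p q s t else off p q s t - q

def stp (p q s t : ℕ) : ℕ :=
  if off p q s t + p + 1 ≤ p + q then p else q

lemma off_lt (p q s : ℕ) (hs : s < p + q) : ∀ t, off p q s t < p + q := by
  intro t
  induction t with
  | zero => simpa [off] using hs
  | succ t ih =>
    simp only [off]
    split <;> omega

lemma off_mod (p q s : ℕ) (hs : s < p + q) (t : ℕ) :
    off p q s t ≡ s + t * p [MOD p + q] := by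
  induction t with
  | zero => simp only [off, Nat.zero_mul, Nat.add_zero]; exact Nat.ModEq.refl _
  | succ t ih =>
    have hlt := off_lt p q s hs t
    simp only [off]
    split
    · rename_i hcond
      have he : s + (t + 1) * p = s + t * p + p := by ring
      rw [he]
      exact ih.add_right p
    · rename_i hcond
      have hq : q ≤ off p q s t := by omega
      have h1 : off p q s t - q ≡ off p q s t + p [MOD p + q] := by
        have he : off p q s t + p = off p q s t - q + (p + q) := by omega
        unfold Nat.ModEq
        rw [he, Nat.add_mod_right]
      have he : s + (t + 1) * p = s + t * p + p := by ring
      rw [he]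
      exact h1.trans (ih.add_right p)

lemma chain {α : Type*} (S : ℕ → α) (p q s A : ℕ) (hs : s < p + q) :
    ∀ tstar, (∀ t < tstar, S (A + bo p q s t) = S (A + bo p q s t + stp p q s t)) →
      S (A + s) = S (A + off p q s tstar) := by
  intro tstar
  induction tstar with
  | zero => intro _; simp [off]
  | succ n ih =>
    intro h
    have h1 : S (A + s) = S (A + off p q s n) := ih (fun t ht => h t (by omega))
    have hlt := off_lt p q s hs n
    have hstep := h n (by omega)
    by_cases hc : off p q s n + p + 1 ≤ p + q
    · simp only [bo, stp, if_pos hc] at hstep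
      have he : off p q s (n + 1) = off p q s n + p := by simp only [off, if_pos hc]
      rw [he, ← Nat.add_assoc]
      exact h1.trans hstep
    · simp only [bo, stp, if_neg hc] at hstep
      have hqle : q ≤ off p q s n := by omega
      have he2 : A + (off p q s n - q) + q = A + off p q s n := by omega
      rw [he2] at hstep
      have he : off p q s (n + 1) = off p q s n - q := by simp only [off, if_neg hc]
      rw [he]
      exact h1.trans hstep.symm

lemma obstruct {α : Type*} (S : ℕ → α) (p q s d A tstar : ℕ) (hs : s < p + q)
    (hreach : off p q s tstar = s + d)
    (hne : S (A + s) ≠ S (A + s + d)) :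
    ∃ t, t < tstar ∧ S (A + bo p q s t) ≠ S (A + bo p q s t + stp p q s t) := by
  by_contra h
  push_neg at h
  apply hne
  have hch := chain S p q s A hs tstar (fun t ht => h t ht)
  rw [hreach] at hch
  rwa [← Nat.add_assoc] at hch

lemma exists_reach (p q : ℕ) (hp : 0 < p) (hq : 0 < q) :
    ∃ t, t + 1 ≤ (p + q) / Nat.gcd p q ∧
      ∀ s, s + Nat.gcd p q < p + q → off p q s t = s + Nat.gcd p q := by
  set d := Nat.gcd p q with hd
  have hd0 : 0 < d := Nat.gcd_pos_of_pos_left q hp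
  have hdvp : d ∣ p := Nat.gcd_dvd_left p q
  have hdvq : d ∣ q := Nat.gcd_dvd_right p q
  have hdvd : d ∣ p + q := Dvd.dvd.add hdvp hdvq
  set m := (p + q) / d with hm
  have hmd : m * d = p + q := Nat.div_mul_cancel hdvd
  have hm0 : 0 < m := by
    rcases Nat.eq_zero_or_pos m with h | h
    · rw [h] at hmd; omega
    · exact h
  have hgpq : Nat.gcd p (p + q) = d := by
    rw [hd, Nat.add_comm, Nat.gcd_add_self_right]
  set a : ℤ := Nat.gcdA p (p + q) with ha
  set b : ℤ := Nat.gcdB p (p + q) with hb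
  have hbez : (d : ℤ) = (p : ℤ) * a + ((p : ℤ) + (q : ℤ)) * b := by
    have h1 := Nat.gcd_eq_gcd_ab p (p + q)
    rw [hgpq] at h1
    push_cast at h1
    linarith [h1]
  set t : ℕ := (a % (m : ℤ)).toNat with ht
  have hmZ : (0 : ℤ) < (m : ℤ) := by exact_mod_cast hm0
  have htZ : (t : ℤ) = a % (m : ℤ) := Int.toNat_of_nonneg (Int.emod_nonneg a (by omega))
  have htm : t < m := by
    have h2 := Int.emod_lt_of_pos a hmZ
    have h3 : (t : ℤ) < (m : ℤ) := by rw [htZ]; exact h2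
    exact_mod_cast h3
  have hpd : (d : ℤ) * ((p / d : ℕ) : ℤ) = (p : ℤ) := by exact_mod_cast Nat.mul_div_cancel' hdvp
  have hmdZ : (m : ℤ) * (d : ℤ) = (p : ℤ) + (q : ℤ) := by exact_mod_cast hmd
  have h2 : (t : ℤ) - a = -((m : ℤ) * (a / (m : ℤ))) := by rw [htZ, Int.emod_def]; ring
  have hdt : ((p : ℤ) + (q : ℤ)) ∣ ((t : ℤ) * (p : ℤ) - (d : ℤ)) := by
    refine ⟨-((a / (m : ℤ)) * ((p / d : ℕ) : ℤ)) - b, ?_⟩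
    linear_combination (p : ℤ) * h2 - hbez - ((a / (m : ℤ))) * ((p / d : ℕ) : ℤ) * hmdZ +
      ((m : ℤ) * (a / (m : ℤ))) * hpd
  have htp : t * p ≡ d [MOD p + q] := by
    have h9 : ((p + q : ℕ) : ℤ) ∣ ((d : ℤ) - ((t * p : ℕ) : ℤ)) := by
      push_cast
      have he : (d : ℤ) - (t : ℤ) * (p : ℤ) = -((t : ℤ) * (p : ℤ) - (d : ℤ)) := by ring
      rw [he]
      exact dvd_neg.mpr hdt
    exact (Nat.modEq_iff_dvd).mpr h9
  refine ⟨t, by omega, ?_⟩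
  intro s hsd
  have h1 := off_mod p q s (by omega) t
  have h2 : s + t * p ≡ s + d [MOD p + q] := Nat.ModEq.add_left s htp
  have h3 := h1.trans h2
  have h4 := off_lt p q s (by omega) t
  unfold Nat.ModEq at h3
  rwa [Nat.mod_eq_of_lt h4, Nat.mod_eq_of_lt hsd] at h3

-- helper: from a + r*ga = b + r*gb and a ≤ b, get r ∣ b - a
lemma dvd_helper {r a b ga gb : ℕ} (h : a + r * ga = b + r * gb) (hab : a ≤ b) :
    r ∣ b - a := by
  rcases Nat.eq_zero_or_pos r with hr | hr
  · subst hr; exact ⟨0, by omega⟩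
  · have hgb : gb ≤ ga := by
      have : r * gb ≤ r * ga := by omega
      exact Nat.le_of_mul_le_mul_left this hr
    obtain ⟨c, hc⟩ := Nat.exists_eq_add_of_le hgb
    refine ⟨c, ?_⟩
    rw [hc, Nat.mul_add] at h
    omega

end HamAux

open HamAux Finset

set_option maxHeartbeats 1000000 in
theorem stmt_0 {α : Type*} [DecidableEq α] (n k x : ℕ) (S : ℕ → α)
    (hk : 1 ≤ k) (hx1 : 1 ≤ x) (hx2 : x ≤ n / 2)
    (p q : ℕ)
    (hp1 : 1 ≤ p) (hp2 : p ≤ x / (4 * k + 2)) (hp3 : hamShift S x p ≤ k)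
    (hq1 : 1 ≤ q) (hq2 : q ≤ x / (4 * k + 2)) (hq3 : hamShift S x q ≤ k)
    (hpq : p < q) :
    hamShift S x (Nat.gcd p q) ≤ 16 * k ^ 2 + 1 := by
  classical
  set d := Nat.gcd p q with hddef
  have hp0 : 0 < p := hp1
  have hq0 : 0 < q := hq1
  have hd0 : 0 < d := Nat.gcd_pos_of_pos_left q hp0
  have hdvp : d ∣ p := Nat.gcd_dvd_left p q
  have hdvq : d ∣ q := Nat.gcd_dvd_right p q
  have hdp : d ≤ p := Nat.le_of_dvd hp0 hdvp
  have hdq : d ≤ q := Nat.le_of_dvd hq0 hdvq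
  have hxq : q * (4 * k + 2) ≤ x := (Nat.le_div_iff_mul_le (by omega)).mp hq2
  have hx6q : 6 * q ≤ x := by
    calc 6 * q = q * 6 := by ring
    _ ≤ q * (4 * k + 2) := Nat.mul_le_mul_left q (by omega)
    _ ≤ x := hxq
  have hpq' : p / d < q / d := Nat.div_lt_div_of_lt_of_dvd hdvq hpq
  set Bp := (Finset.Icc 1 x).filter (fun z => S z ≠ S (z + p)) with hBpdef
  set Bq := (Finset.Icc 1 x).filter (fun z => S z ≠ S (z + q)) with hBqdef
  set M := (Finset.Icc 1 x).filter (fun z => S z ≠ S (z + d)) with hMdef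
  have hcBp : Bp.card ≤ k := hp3
  have hcBq : Bq.card ≤ k := hq3
  have hgoal : hamShift S x d = M.card := rfl
  rw [hgoal]
  obtain ⟨T, hT1, hT2⟩ := exists_reach p q hp0 hq0
  rw [← hddef] at hT1 hT2
  rcases le_or_gt (q / d) (2 * k) with hcase | hcase
  · -- CASE A : small q/d, direct path-charging
    have hTbound : T + 2 ≤ 4 * k := by
      have h1 : (p + q) / d = p / d + q / d := Nat.add_div_of_dvd_right hdvp
      omega
    set Mup := M.filter (fun z => z + q ≤ x + 1) with hMup
    set Mdn := M.filter (fun z => ¬ (z + q ≤ x + 1)) with hMdn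
    have hsplit : Mup.card + Mdn.card = M.card := card_filter_add_card_filter_not _
    -- counting Mup
    have hup : Mup.card ≤ T * (2 * k) := by
      have hreach0 : off p q 0 T = 0 + d := hT2 0 (by omega)
      have hobs : ∀ z ∈ Mup, ∃ t, t < T ∧
          S (z + bo p q 0 t) ≠ S (z + bo p q 0 t + stp p q 0 t) := by
        intro z hz
        rw [hMup, mem_filter, hMdef, mem_filter, mem_Icc] at hz
        obtain ⟨⟨⟨hz1, hz2⟩, hz3⟩, hz4⟩ := hz
        have hne : S (z + 0) ≠ S (z + 0 + d) := by simpa using hz3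
        exact obstruct S p q 0 d z T (by omega) hreach0 hne
      set f : ℕ → ℕ × ℕ := fun z =>
        if h : ∃ t, t < T ∧ S (z + bo p q 0 t) ≠ S (z + bo p q 0 t + stp p q 0 t) then
          (Nat.find h, z + bo p q 0 (Nat.find h)) else (0, 0) with hf
      have hmaps : ∀ z ∈ Mup, f z ∈ (range T) ×ˢ (Bp ∪ Bq) := by
        intro z hz
        have hex := hobs z hz
        rw [hMup, mem_filter, hMdef, mem_filter, mem_Icc] at hz
        obtain ⟨⟨⟨hz1, hz2⟩, hz3⟩, hz4⟩ := hz
        rw [hf]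
        simp only [dif_pos hex]
        obtain ⟨ht, hmis⟩ := Nat.find_spec hex
        set t := Nat.find hex with htdef
        have hofflt := off_lt p q 0 (by omega) t
        rw [mem_product, mem_range]
        refine ⟨ht, ?_⟩
        by_cases hc : off p q 0 t + p + 1 ≤ p + q
        · have hbo : bo p q 0 t = off p q 0 t := by simp only [bo, if_pos hc]
          have hst : stp p q 0 t = p := by simp only [stp, if_pos hc]
          apply mem_union_left
          rw [hBpdef, mem_filter, mem_Icc]
          rw [hbo, hst] at hmis
          exact ⟨⟨by omega, by omega⟩, by rw [hbo]; exact hmis⟩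
        · have hbo : bo p q 0 t = off p q 0 t - q := by simp only [bo, if_neg hc]
          have hst : stp p q 0 t = q := by simp only [stp, if_neg hc]
          apply mem_union_right
          rw [hBqdef, mem_filter, mem_Icc]
          rw [hbo, hst] at hmis
          exact ⟨⟨by omega, by omega⟩, by rw [hbo]; exact hmis⟩
      have hinj : Set.InjOn f Mup := by
        intro z1 h1 z2 h2 heq
        have hex1 := hobs z1 (Finset.mem_coe.mp h1)
        have hex2 := hobs z2 (Finset.mem_coe.mp h2)
        rw [hf] at heq
        simp only [dif_pos hex1, dif_pos hex2, Prod.mk.injEq] at heq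
        obtain ⟨hteq, hweq⟩ := heq
        rw [hteq] at hweq
        omega
      calc Mup.card ≤ ((range T) ×ˢ (Bp ∪ Bq)).card :=
            Finset.card_le_card_of_injOn f hmaps hinj
        _ = T * (Bp ∪ Bq).card := by rw [card_product, card_range]
        _ ≤ T * (2 * k) := Nat.mul_le_mul_left _
            (le_trans (card_union_le _ _) (by omega))
    have hdn : Mdn.card ≤ T * (2 * k) := by
      have hs : (p + q - 1 - d) + d < p + q := by omega
      have hreach1 : off p q (p + q - 1 - d) T = (p + q - 1 - d) + d := hT2 _ hs
      have hobs : ∀ z ∈ Mdn, ∃ t, t < T ∧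
          S ((z + d + 1 - (p + q)) + bo p q (p + q - 1 - d) t) ≠
            S ((z + d + 1 - (p + q)) + bo p q (p + q - 1 - d) t + stp p q (p + q - 1 - d) t) := by
        intro z hz
        rw [hMdn, mem_filter, hMdef, mem_filter, mem_Icc] at hz
        obtain ⟨⟨⟨hz1, hz2⟩, hz3⟩, hz4⟩ := hz
        have hzgt : p + q < z := by omega
        have hA : (z + d + 1 - (p + q)) + (p + q - 1 - d) = z := by omega
        apply obstruct S p q (p + q - 1 - d) d (z + d + 1 - (p + q)) T (by omega) hreach1
        rw [hA]
        exact hz3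
      set f : ℕ → ℕ × ℕ := fun z =>
        if h : ∃ t, t < T ∧ S ((z + d + 1 - (p + q)) + bo p q (p + q - 1 - d) t) ≠
            S ((z + d + 1 - (p + q)) + bo p q (p + q - 1 - d) t + stp p q (p + q - 1 - d) t) then
          (Nat.find h, (z + d + 1 - (p + q)) + bo p q (p + q - 1 - d) (Nat.find h)) else (0, 0) with hf
      have hmaps : ∀ z ∈ Mdn, f z ∈ (range T) ×ˢ (Bp ∪ Bq) := by
        intro z hz
        have hex := hobs z hz
        rw [hMdn, mem_filter, hMdef, mem_filter, mem_Icc] at hz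
        obtain ⟨⟨⟨hz1, hz2⟩, hz3⟩, hz4⟩ := hz
        have hzgt : p + q < z := by omega
        rw [hf]
        simp only [dif_pos hex]
        obtain ⟨ht, hmis⟩ := Nat.find_spec hex
        set t := Nat.find hex with htdef
        have hofflt := off_lt p q (p + q - 1 - d) (by omega) t
        rw [mem_product, mem_range]
        refine ⟨ht, ?_⟩
        by_cases hc : off p q (p + q - 1 - d) t + p + 1 ≤ p + q
        · have hbo : bo p q (p + q - 1 - d) t = off p q (p + q - 1 - d) t := by
            simp only [bo, if_pos hc]
          have hst : stp p q (p + q - 1 - d) t = p := by simp only [stp, if_pos hc]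
          apply mem_union_left
          rw [hBpdef, mem_filter, mem_Icc]
          rw [hbo, hst] at hmis
          exact ⟨⟨by omega, by omega⟩, by rw [hbo]; exact hmis⟩
        · have hbo : bo p q (p + q - 1 - d) t = off p q (p + q - 1 - d) t - q := by
            simp only [bo, if_neg hc]
          have hst : stp p q (p + q - 1 - d) t = q := by simp only [stp, if_neg hc]
          apply mem_union_right
          rw [hBqdef, mem_filter, mem_Icc]
          rw [hbo, hst] at hmis
          exact ⟨⟨by omega, by omega⟩, by rw [hbo]; exact hmis⟩
      have hinj : Set.InjOn f Mdn := by
        intro z1 h1 z2 h2 heq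
        have hm1 := Finset.mem_coe.mp h1
        have hm2 := Finset.mem_coe.mp h2
        have hex1 := hobs z1 hm1
        have hex2 := hobs z2 hm2
        rw [hMdn, mem_filter, hMdef, mem_filter, mem_Icc] at hm1 hm2
        rw [hf] at heq
        simp only [dif_pos hex1, dif_pos hex2, Prod.mk.injEq] at heq
        obtain ⟨hteq, hweq⟩ := heq
        rw [hteq] at hweq
        have hzgt1 : p + q < z1 := by omega
        have hzgt2 : p + q < z2 := by omega
        omega
      calc Mdn.card ≤ ((range T) ×ˢ (Bp ∪ Bq)).card :=
            Finset.card_le_card_of_injOn f hmaps hinj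
        _ = T * (Bp ∪ Bq).card := by rw [card_product, card_range]
        _ ≤ T * (2 * k) := Nat.mul_le_mul_left _
            (le_trans (card_union_le _ _) (by omega))
    have h3 : (T + 2) * (4 * k) ≤ (4 * k) * (4 * k) := Nat.mul_le_mul_right _ hTbound
    have h4 : (4 * k) * (4 * k) = 16 * k ^ 2 := by ring
    have h5 : (T + 2) * (4 * k) = T * (2 * k) * 2 + 8 * k := by ring
    omega
  · -- CASE B : large q/d, window + runs
    have hwin : ∃ l, 1 ≤ l ∧ l + (p + q) ≤ x + 1 ∧
        ∀ w, l ≤ w → w < l + (p + q) → w ∉ Bp ∧ w ∉ Bq := by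
      by_contra hcon
      push_neg at hcon
      have hsub : Finset.range (2 * k + 1) ⊆ (Bp ∪ Bq).image (fun b => (b - 1) / (p + q)) := by
        intro i hi
        rw [mem_range] at hi
        have h4 : (i + 1) * (p + q) = i * (p + q) + (p + q) := by ring
        have hwle : (1 + i * (p + q)) + (p + q) ≤ x + 1 := by
          have h1 : (i + 1) * (p + q) ≤ (2 * k + 1) * (p + q) := Nat.mul_le_mul_right _ (by omega)
          have h2 : (2 * k + 1) * (p + q) ≤ (2 * k + 1) * (2 * q) := Nat.mul_le_mul_left _ (by omega)
          have h3 : (2 * k + 1) * (2 * q) = q * (4 * k + 2) := by ring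
          omega
        obtain ⟨w, hw1, hw2, hw3⟩ := hcon (1 + i * (p + q)) (by omega) hwle
        rw [mem_image]
        refine ⟨w, ?_, ?_⟩
        · rcases Classical.em (w ∈ Bp) with h | h
          · exact mem_union_left _ h
          · exact mem_union_right _ (hw3 h)
        · exact Nat.div_eq_of_lt_le (by omega) (by omega)
      have h5 := Finset.card_le_card hsub
      have h6 := Finset.card_image_le (s := Bp ∪ Bq) (f := fun b => (b - 1) / (p + q))
      have h7 := card_union_le Bp Bq
      rw [card_range] at h5
      omega
    obtain ⟨l, hl1, hl2, hlclean⟩ := hwin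
    have hF : ∀ z, l ≤ z → z + d < l + (p + q) → S z = S (z + d) := by
      intro z hzl hzd
      by_contra hne
      have hs : (z - l) < p + q := by omega
      have hreach : off p q (z - l) T = (z - l) + d := hT2 _ (by omega)
      have hzl' : l + (z - l) = z := by omega
      obtain ⟨t, ht, hmis⟩ := obstruct S p q (z - l) d l T hs hreach (by rw [hzl']; exact hne)
      have hofflt := off_lt p q (z - l) hs t
      by_cases hc : off p q (z - l) t + p + 1 ≤ p + q
      · have hbo : bo p q (z - l) t = off p q (z - l) t := by simp only [bo, if_pos hc]
        have hst : stp p q (z - l) t = p := by simp only [stp, if_pos hc]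
        rw [hbo, hst] at hmis
        have hwmem : l + off p q (z - l) t ∈ Bp := by
          rw [hBpdef, mem_filter, mem_Icc]
          exact ⟨⟨by omega, by omega⟩, hmis⟩
        exact (hlclean _ (by omega) (by omega)).1 hwmem
      · have hbo : bo p q (z - l) t = off p q (z - l) t - q := by simp only [bo, if_neg hc]
        have hst : stp p q (z - l) t = q := by simp only [stp, if_neg hc]
        rw [hbo, hst] at hmis
        have hwmem : l + (off p q (z - l) t - q) ∈ Bq := by
          rw [hBqdef, mem_filter, mem_Icc]
          exact ⟨⟨by omega, by omega⟩, hmis⟩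
        exact (hlclean _ (by omega) (by omega)).2 hwmem
    -- predicates
    set Plo : ℕ → Prop := fun y => 1 ≤ y ∧ y ≤ x ∧ y < l ∧ S y ≠ S (y + d) with hPlo
    set Phi : ℕ → Prop := fun y => y ≤ x ∧ l + (p + q) ≤ y + d ∧ S y ≠ S (y + d) with hPhi
    have hgexlo : ∀ (r z : ℕ), 0 < r → ∃ j, ¬ Plo (z + r * (j + 1)) := by
      intro r z hr
      refine ⟨l, ?_⟩
      simp only [hPlo]
      intro hcon
      obtain ⟨h1, h2, h3, h4⟩ := hcon
      have hmul : l + 1 ≤ r * (l + 1) := Nat.le_mul_of_pos_left _ hr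
      omega
    have hgexhi : ∀ (r z : ℕ), 0 < r → ∃ j, ¬ Phi (z - r * (j + 1)) := by
      intro r z hr
      refine ⟨z, ?_⟩
      simp only [hPhi]
      intro hcon
      obtain ⟨h1, h2, h3⟩ := hcon
      have hmul : z + 1 ≤ r * (z + 1) := Nat.le_mul_of_pos_left _ hr
      omega
    set glp : ℕ → ℕ := fun z => Nat.find (hgexlo p z hp0) with hglp
    set glq : ℕ → ℕ := fun z => Nat.find (hgexlo q z hq0) with hglq
    set ghp : ℕ → ℕ := fun z => Nat.find (hgexhi p z hp0) with hghp
    set ghq : ℕ → ℕ := fun z => Nat.find (hgexhi q z hq0) with hghq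
    -- run lemmas
    have hrun_lp : ∀ z, Plo z → ∀ j, j ≤ glp z → Plo (z + p * j) := by
      intro z hz j hj
      cases j with
      | zero => simpa using hz
      | succ j' =>
        have hmin := Nat.find_min (hgexlo p z hp0) (show j' < glp z by omega)
        exact not_not.mp hmin
    have hrun_lq : ∀ z, Plo z → ∀ j, j ≤ glq z → Plo (z + q * j) := by
      intro z hz j hj
      cases j with
      | zero => simpa using hz
      | succ j' =>
        have hmin := Nat.find_min (hgexlo q z hq0) (show j' < glq z by omega)
        exact not_not.mp hmin
    have hrun_hp : ∀ z, Phi z → ∀ j, j ≤ ghp z → Phi (z - p * j) := by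
      intro z hz j hj
      cases j with
      | zero => simpa using hz
      | succ j' =>
        have hmin := Nat.find_min (hgexhi p z hp0) (show j' < ghp z by omega)
        exact not_not.mp hmin
    have hrun_hq : ∀ z, Phi z → ∀ j, j ≤ ghq z → Phi (z - q * j) := by
      intro z hz j hj
      cases j with
      | zero => simpa using hz
      | succ j' =>
        have hmin := Nat.find_min (hgexhi q z hq0) (show j' < ghq z by omega)
        exact not_not.mp hmin
    -- top/bot successor failures
    have hTs_lp : ∀ z, ¬ Plo (z + p * glp z + p) := by
      intro z
      have hspec := Nat.find_spec (hgexlo p z hp0)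
      have he : z + p * glp z + p = z + p * (glp z + 1) := by ring
      rw [he]
      exact hspec
    have hTs_lq : ∀ z, ¬ Plo (z + q * glq z + q) := by
      intro z
      have hspec := Nat.find_spec (hgexlo q z hq0)
      have he : z + q * glq z + q = z + q * (glq z + 1) := by ring
      rw [he]
      exact hspec
    have hTs_hp : ∀ z, ¬ Phi (z - p * ghp z - p) := by
      intro z
      have hspec := Nat.find_spec (hgexhi p z hp0)
      have he : z - p * ghp z - p = z - p * (ghp z + 1) := by
        have h1 : p * (ghp z + 1) = p * ghp z + p := by ring
        omega
      rw [he]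
      exact hspec
    have hTs_hq : ∀ z, ¬ Phi (z - q * ghq z - q) := by
      intro z
      have hspec := Nat.find_spec (hgexhi q z hq0)
      have he : z - q * ghq z - q = z - q * (ghq z + 1) := by
        have h1 : q * (ghq z + 1) = q * ghq z + q := by ring
        omega
      rw [he]
      exact hspec
    -- charge sets
    set Cp := Bp ∪ Bp.image (fun b => b - d) with hCpdef
    set Cq := Bq ∪ Bq.image (fun b => b - d) with hCqdef
    set Cp' := Bp.image (fun b => b + p) ∪ Bp.image (fun b => b + p - d) with hCp'def
    set Cq' := Bq.image (fun b => b + q) ∪ Bq.image (fun b => b + q - d) with hCq'def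
    have hCpcard : Cp.card ≤ 2 * k := by
      rw [hCpdef]
      have h1 := card_union_le Bp (Bp.image (fun b => b - d))
      have h2 := Finset.card_image_le (s := Bp) (f := fun b => b - d)
      omega
    have hCqcard : Cq.card ≤ 2 * k := by
      rw [hCqdef]
      have h1 := card_union_le Bq (Bq.image (fun b => b - d))
      have h2 := Finset.card_image_le (s := Bq) (f := fun b => b - d)
      omega
    have hCp'card : Cp'.card ≤ 2 * k := by
      rw [hCp'def]
      have h1 := card_union_le (Bp.image (fun b => b + p)) (Bp.image (fun b => b + p - d))
      have h2 := Finset.card_image_le (s := Bp) (f := fun b => b + p)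
      have h3 := Finset.card_image_le (s := Bp) (f := fun b => b + p - d)
      omega
    have hCq'card : Cq'.card ≤ 2 * k := by
      rw [hCq'def]
      have h1 := card_union_le (Bq.image (fun b => b + q)) (Bq.image (fun b => b + q - d))
      have h2 := Finset.card_image_le (s := Bq) (f := fun b => b + q)
      have h3 := Finset.card_image_le (s := Bq) (f := fun b => b + q - d)
      omega
    -- charges
    have hchg_lp : ∀ z, Plo z → z + p * glp z ∈ Cp := by
      intro z hz
      set Tt := z + p * glp z with hTt
      have hT := hrun_lp z hz _ le_rfl
      have hTs := hTs_lp z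
      simp only [hPlo] at hT
      obtain ⟨hT1, hT2, hT3, hT4⟩ := hT
      have heq2 : S (Tt + p) = S (Tt + p + d) := by
        rcases lt_or_ge (Tt + p) l with hcl | hcl
        · by_contra hne2
          exact hTs ⟨by omega, by omega, hcl, hne2⟩
        · exact hF (Tt + p) hcl (by omega)
      by_cases hc2 : S Tt = S (Tt + p)
      · have h7 : S (Tt + d) ≠ S (Tt + d + p) := by
          intro h8
          apply hT4
          have e1 : Tt + d + p = Tt + p + d := by ring
          rw [e1] at h8
          calc S Tt = S (Tt + p) := hc2
            _ = S (Tt + p + d) := heq2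
            _ = S (Tt + d) := h8.symm
        have hmem : Tt + d ∈ Bp := by
          rw [hBpdef, mem_filter, mem_Icc]
          exact ⟨⟨by omega, by omega⟩, h7⟩
        rw [hCpdef]
        apply mem_union_right
        rw [mem_image]
        exact ⟨Tt + d, hmem, by omega⟩
      · rw [hCpdef]
        apply mem_union_left
        rw [hBpdef, mem_filter, mem_Icc]
        exact ⟨⟨by omega, by omega⟩, hc2⟩
    have hchg_lq : ∀ z, Plo z → z + q * glq z ∈ Cq := by
      intro z hz
      set Tt := z + q * glq z with hTt
      have hT := hrun_lq z hz _ le_rfl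
      have hTs := hTs_lq z
      simp only [hPlo] at hT
      obtain ⟨hT1, hT2, hT3, hT4⟩ := hT
      have heq2 : S (Tt + q) = S (Tt + q + d) := by
        rcases lt_or_ge (Tt + q) l with hcl | hcl
        · by_contra hne2
          exact hTs ⟨by omega, by omega, hcl, hne2⟩
        · exact hF (Tt + q) hcl (by omega)
      by_cases hc2 : S Tt = S (Tt + q)
      · have h7 : S (Tt + d) ≠ S (Tt + d + q) := by
          intro h8
          apply hT4
          have e1 : Tt + d + q = Tt + q + d := by ring
          rw [e1] at h8
          calc S Tt = S (Tt + q) := hc2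
            _ = S (Tt + q + d) := heq2
            _ = S (Tt + d) := h8.symm
        have hmem : Tt + d ∈ Bq := by
          rw [hBqdef, mem_filter, mem_Icc]
          exact ⟨⟨by omega, by omega⟩, h7⟩
        rw [hCqdef]
        apply mem_union_right
        rw [mem_image]
        exact ⟨Tt + d, hmem, by omega⟩
      · rw [hCqdef]
        apply mem_union_left
        rw [hBqdef, mem_filter, mem_Icc]
        exact ⟨⟨by omega, by omega⟩, hc2⟩
    have hchg_hp : ∀ z, Phi z → z - p * ghp z ∈ Cp' := by
      intro z hz
      set Tt := z - p * ghp z with hTt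
      have hT := hrun_hp z hz _ le_rfl
      have hTs := hTs_hp z
      simp only [hPhi] at hT
      obtain ⟨hT1, hT2, hT3⟩ := hT
      have heq2 : S (Tt - p) = S (Tt - p + d) := by
        rcases le_or_gt (l + (p + q)) ((Tt - p) + d) with hcl | hcl
        · by_contra hne2
          exact hTs ⟨by omega, hcl, hne2⟩
        · exact hF (Tt - p) (by omega) hcl
      have he3 : Tt - p + p = Tt := by omega
      by_cases hc2 : S (Tt - p) = S Tt
      · have h7 : S (Tt - p + d) ≠ S (Tt - p + d + p) := by
          intro h8
          apply hT3
          have e1 : Tt - p + d + p = Tt + d := by omega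
          rw [e1] at h8
          calc S Tt = S (Tt - p) := hc2.symm
            _ = S (Tt - p + d) := heq2
            _ = S (Tt + d) := h8
        have hmem : Tt - p + d ∈ Bp := by
          rw [hBpdef, mem_filter, mem_Icc]
          exact ⟨⟨by omega, by omega⟩, h7⟩
        rw [hCp'def]
        apply mem_union_right
        rw [mem_image]
        exact ⟨Tt - p + d, hmem, by omega⟩
      · have h7 : S (Tt - p) ≠ S (Tt - p + p) := by
          rw [he3]
          exact hc2
        have hmem : Tt - p ∈ Bp := by
          rw [hBpdef, mem_filter, mem_Icc]
          exact ⟨⟨by omega, by omega⟩, h7⟩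
        rw [hCp'def]
        apply mem_union_left
        rw [mem_image]
        exact ⟨Tt - p, hmem, by omega⟩
    have hchg_hq : ∀ z, Phi z → z - q * ghq z ∈ Cq' := by
      intro z hz
      set Tt := z - q * ghq z with hTt
      have hT := hrun_hq z hz _ le_rfl
      have hTs := hTs_hq z
      simp only [hPhi] at hT
      obtain ⟨hT1, hT2, hT3⟩ := hT
      have heq2 : S (Tt - q) = S (Tt - q + d) := by
        rcases le_or_gt (l + (p + q)) ((Tt - q) + d) with hcl | hcl
        · by_contra hne2
          exact hTs ⟨by omega, hcl, hne2⟩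
        · exact hF (Tt - q) (by omega) hcl
      have he3 : Tt - q + q = Tt := by omega
      by_cases hc2 : S (Tt - q) = S Tt
      · have h7 : S (Tt - q + d) ≠ S (Tt - q + d + q) := by
          intro h8
          apply hT3
          have e1 : Tt - q + d + q = Tt + d := by omega
          rw [e1] at h8
          calc S Tt = S (Tt - q) := hc2.symm
            _ = S (Tt - q + d) := heq2
            _ = S (Tt + d) := h8
        have hmem : Tt - q + d ∈ Bq := by
          rw [hBqdef, mem_filter, mem_Icc]
          exact ⟨⟨by omega, by omega⟩, h7⟩
        rw [hCq'def]
        apply mem_union_right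
        rw [mem_image]
        exact ⟨Tt - q + d, hmem, by omega⟩
      · have h7 : S (Tt - q) ≠ S (Tt - q + q) := by
          rw [he3]
          exact hc2
        have hmem : Tt - q ∈ Bq := by
          rw [hBqdef, mem_filter, mem_Icc]
          exact ⟨⟨by omega, by omega⟩, h7⟩
        rw [hCq'def]
        apply mem_union_left
        rw [mem_image]
        exact ⟨Tt - q, hmem, by omega⟩
    -- divisibility transfer
    have hdvd_qd : ∀ c : ℕ, q ∣ p * c → (q / d) ∣ c := by
      intro c hdv
      have hcop : Nat.Coprime (q / d) (p / d) := (Nat.coprime_div_gcd_div_gcd hd0).symm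
      have hp' : d * (p / d) = p := Nat.mul_div_cancel' hdvp
      have hq'' : d * (q / d) = q := Nat.mul_div_cancel' hdvq
      have h1 : d * (q / d) ∣ d * ((p / d) * c) := by
        rw [hq'', ← Nat.mul_assoc, hp']
        exact hdv
      have h2 : (q / d) ∣ (p / d) * c := (Nat.mul_dvd_mul_iff_left hd0).mp h1
      exact hcop.dvd_of_dvd_mul_left h2
    -- low-side collision
    have hcol_lo : ∀ z1 z2, Plo z1 → Plo z2 → z1 < z2 →
        z1 + p * glp z1 = z2 + p * glp z2 → z1 + q * glq z1 = z2 + q * glq z2 → False := by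
      intro z1 z2 hz1 hz2 hlt heqp heqq
      have hdp2 : p ∣ z2 - z1 := dvd_helper heqp (le_of_lt hlt)
      have hdq2 : q ∣ z2 - z1 := dvd_helper heqq (le_of_lt hlt)
      have hlcm : Nat.lcm p q ∣ z2 - z1 := Nat.lcm_dvd hdp2 hdq2
      have hlcm_eq : Nat.lcm p q = p * (q / d) := by
        have h0 : Nat.lcm p q = p * q / d := rfl
        rw [h0, Nat.mul_div_assoc p hdvq]
      have hge : p * (q / d) ≤ z2 - z1 := by
        rw [← hlcm_eq]
        exact Nat.le_of_dvd (by omega) hlcm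
      have hmemj : ∀ j, j < q / d → Plo (z1 + p * j) := by
        intro j hj
        apply hrun_lp z1 hz1
        have h1 : p * (j + 1) ≤ p * (q / d) := Nat.mul_le_mul_left _ (by omega)
        have h1' : p * (j + 1) = p * j + p := by ring
        have h4 : p * j < p * glp z1 := by omega
        exact le_of_lt (Nat.lt_of_mul_lt_mul_left h4)
      have hinj2 : ∀ j1, j1 < q / d → ∀ j2, j2 < q / d →
          (z1 + p * j1) + q * glq (z1 + p * j1) = (z1 + p * j2) + q * glq (z1 + p * j2) →
          j1 = j2 := by
        have key : ∀ j1 j2, j1 ≤ j2 → j2 < q / d →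
            (z1 + p * j1) + q * glq (z1 + p * j1) = (z1 + p * j2) + q * glq (z1 + p * j2) →
            j1 = j2 := by
          intro j1 j2 hj12 hj2 he
          have hmm : p * j1 ≤ p * j2 := Nat.mul_le_mul_left _ hj12
          have hdvq2 : q ∣ (z1 + p * j2) - (z1 + p * j1) := dvd_helper he (by omega)
          have he2 : (z1 + p * j2) - (z1 + p * j1) = p * (j2 - j1) := by
            obtain ⟨c, hc⟩ := Nat.exists_eq_add_of_le hj12
            rw [hc]
            have h5 : p * (j1 + c) = p * j1 + p * c := by ring
            have h6 : (j1 + c) - j1 = c := by omega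
            rw [h6, h5]
            omega
          rw [he2] at hdvq2
          have h7 := hdvd_qd _ hdvq2
          have h9 : j2 - j1 = 0 := Nat.eq_zero_of_dvd_of_lt h7 (by omega)
          omega
        intro j1 hj1 j2 hj2 he
        rcases le_total j1 j2 with h | h
        · exact key j1 j2 h hj2 he
        · exact (key j2 j1 h hj1 he.symm).symm
      have hcard2 : (range (q / d)).card ≤ Cq.card := by
        apply Finset.card_le_card_of_injOn (fun j => (z1 + p * j) + q * glq (z1 + p * j))
        · intro j hj
          rw [Finset.mem_coe, mem_range] at hj
          exact hchg_lq _ (hmemj j hj)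
        · intro j1 h1 j2 h2 he
          exact hinj2 j1 (mem_range.mp h1) j2 (mem_range.mp h2) he
      rw [card_range] at hcard2
      omega
    -- high-side collision
    have hcol_hi : ∀ z1 z2, Phi z1 → Phi z2 → z1 < z2 →
        z1 - p * ghp z1 = z2 - p * ghp z2 → z1 - q * ghq z1 = z2 - q * ghq z2 → False := by
      intro z1 z2 hz1 hz2 hlt heqp heqq
      have hb1 := hrun_hp z1 hz1 _ le_rfl
      have hb2 := hrun_hp z2 hz2 _ le_rfl
      have hb1q := hrun_hq z1 hz1 _ le_rfl
      have hb2q := hrun_hq z2 hz2 _ le_rfl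
      simp only [hPhi] at hb1 hb2 hb1q hb2q
      have hsub1 : p * ghp z1 < z1 := by omega
      have hsub2 : p * ghp z2 < z2 := by omega
      have hsub1q : q * ghq z1 < z1 := by omega
      have hsub2q : q * ghq z2 < z2 := by omega
      have heqp' : z1 + p * ghp z2 = z2 + p * ghp z1 := by omega
      have heqq' : z1 + q * ghq z2 = z2 + q * ghq z1 := by omega
      have hdp2 : p ∣ z2 - z1 := dvd_helper heqp' (le_of_lt hlt)
      have hdq2 : q ∣ z2 - z1 := dvd_helper heqq' (le_of_lt hlt)
      have hlcm : Nat.lcm p q ∣ z2 - z1 := Nat.lcm_dvd hdp2 hdq2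
      have hlcm_eq : Nat.lcm p q = p * (q / d) := by
        have h0 : Nat.lcm p q = p * q / d := rfl
        rw [h0, Nat.mul_div_assoc p hdvq]
      have hge : p * (q / d) ≤ z2 - z1 := by
        rw [← hlcm_eq]
        exact Nat.le_of_dvd (by omega) hlcm
      have hmemj : ∀ j, j < q / d → Phi (z2 - p * j) := by
        intro j hj
        apply hrun_hp z2 hz2
        have h1 : p * (j + 1) ≤ p * (q / d) := Nat.mul_le_mul_left _ (by omega)
        have h1' : p * (j + 1) = p * j + p := by ring
        have h4 : p * j < p * ghp z2 := by omega
        exact le_of_lt (Nat.lt_of_mul_lt_mul_left h4)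
      have hinj2 : ∀ j1, j1 < q / d → ∀ j2, j2 < q / d →
          (z2 - p * j1) - q * ghq (z2 - p * j1) = (z2 - p * j2) - q * ghq (z2 - p * j2) →
          j1 = j2 := by
        have key : ∀ j1 j2, j1 ≤ j2 → j2 < q / d →
            (z2 - p * j1) - q * ghq (z2 - p * j1) = (z2 - p * j2) - q * ghq (z2 - p * j2) →
            j1 = j2 := by
          intro j1 j2 hj12 hj2 he
          have hmm : p * j1 ≤ p * j2 := Nat.mul_le_mul_left _ hj12
          have hq1m := hrun_hq _ (hmemj j1 (by omega)) _ le_rfl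
          have hq2m := hrun_hq _ (hmemj j2 hj2) _ le_rfl
          simp only [hPhi] at hq1m hq2m
          have hp1m := hmemj j1 (by omega)
          have hp2m := hmemj j2 hj2
          simp only [hPhi] at hp1m hp2m
          have hs1 : q * ghq (z2 - p * j1) < z2 - p * j1 := by omega
          have hs2 : q * ghq (z2 - p * j2) < z2 - p * j2 := by omega
          have hs3 : p * j1 < z2 := by omega
          have hs4 : p * j2 < z2 := by omega
          have he' : (z2 - p * j2) + q * ghq (z2 - p * j1) =
              (z2 - p * j1) + q * ghq (z2 - p * j2) := by omega
          have hdvq2 : q ∣ (z2 - p * j1) - (z2 - p * j2) := dvd_helper he' (by omega)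
          have he2 : (z2 - p * j1) - (z2 - p * j2) = p * (j2 - j1) := by
            obtain ⟨c, hc⟩ := Nat.exists_eq_add_of_le hj12
            subst hc
            have h5 : p * (j1 + c) = p * j1 + p * c := by ring
            have h6 : (j1 + c) - j1 = c := by omega
            rw [h6]
            omega
          rw [he2] at hdvq2
          have h7 := hdvd_qd _ hdvq2
          have h9 : j2 - j1 = 0 := Nat.eq_zero_of_dvd_of_lt h7 (by omega)
          omega
        intro j1 hj1 j2 hj2 he
        rcases le_total j1 j2 with h | h
        · exact key j1 j2 h hj2 he
        · exact (key j2 j1 h hj1 he.symm).symm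
      have hcard2 : (range (q / d)).card ≤ Cq'.card := by
        apply Finset.card_le_card_of_injOn (fun j => (z2 - p * j) - q * ghq (z2 - p * j))
        · intro j hj
          rw [Finset.mem_coe, mem_range] at hj
          exact hchg_hq _ (hmemj j hj)
        · intro j1 h1 j2 h2 he
          exact hinj2 j1 (mem_range.mp h1) j2 (mem_range.mp h2) he
      rw [card_range] at hcard2
      omega
    -- split M
    set MloS := M.filter (fun z => z < l) with hMloS
    set MhiS := M.filter (fun z => ¬ z < l) with hMhiS
    have hsplit : MloS.card + MhiS.card = M.card := card_filter_add_card_filter_not _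
    have hmemlo : ∀ z ∈ MloS, Plo z := by
      intro z hz
      rw [hMloS, mem_filter, hMdef, mem_filter, mem_Icc] at hz
      exact ⟨hz.1.1.1, hz.1.1.2, hz.2, hz.1.2⟩
    have hmemhi : ∀ z ∈ MhiS, Phi z := by
      intro z hz
      rw [hMhiS, mem_filter, hMdef, mem_filter, mem_Icc] at hz
      obtain ⟨⟨⟨hz1, hz2⟩, hz3⟩, hz4⟩ := hz
      refine ⟨hz2, ?_, hz3⟩
      by_contra hcon
      exact hz3 (hF z (by omega) (by omega))
    have hlocount : MloS.card ≤ 2 * k * (2 * k) := by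
      calc MloS.card ≤ (Cp ×ˢ Cq).card := by
            apply Finset.card_le_card_of_injOn (fun z => (z + p * glp z, z + q * glq z))
            · intro z hz
              rw [Finset.mem_coe, mem_product]
              exact ⟨hchg_lp z (hmemlo z hz), hchg_lq z (hmemlo z hz)⟩
            · intro z1 h1 z2 h2 he
              rw [Prod.mk.injEq] at he
              by_contra hne
              rcases lt_trichotomy z1 z2 with h | h | h
              · exact hcol_lo z1 z2 (hmemlo _ (Finset.mem_coe.mp h1))
                  (hmemlo _ (Finset.mem_coe.mp h2)) h he.1 he.2
              · exact hne h
              · exact hcol_lo z2 z1 (hmemlo _ (Finset.mem_coe.mp h2))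
                  (hmemlo _ (Finset.mem_coe.mp h1)) h he.1.symm he.2.symm
        _ = Cp.card * Cq.card := card_product _ _
        _ ≤ 2 * k * (2 * k) := Nat.mul_le_mul hCpcard hCqcard
    have hhicount : MhiS.card ≤ 2 * k * (2 * k) := by
      calc MhiS.card ≤ (Cp' ×ˢ Cq').card := by
            apply Finset.card_le_card_of_injOn (fun z => (z - p * ghp z, z - q * ghq z))
            · intro z hz
              rw [Finset.mem_coe, mem_product]
              exact ⟨hchg_hp z (hmemhi z hz), hchg_hq z (hmemhi z hz)⟩
            · intro z1 h1 z2 h2 he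
              rw [Prod.mk.injEq] at he
              by_contra hne
              rcases lt_trichotomy z1 z2 with h | h | h
              · exact hcol_hi z1 z2 (hmemhi _ (Finset.mem_coe.mp h1))
                  (hmemhi _ (Finset.mem_coe.mp h2)) h he.1 he.2
              · exact hne h
              · exact hcol_hi z2 z1 (hmemhi _ (Finset.mem_coe.mp h2))
                  (hmemhi _ (Finset.mem_coe.mp h1)) h he.1.symm he.2.symm
        _ = Cp'.card * Cq'.card := card_product _ _
        _ ≤ 2 * k * (2 * k) := Nat.mul_le_mul hCp'card hCq'card
    have hkk : 2 * k * (2 * k) = 4 * k ^ 2 := by ring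
    have hkk2 : 4 * k ^ 2 + 4 * k ^ 2 ≤ 16 * k ^ 2 + 1 := by nlinarith
    omega
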